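/- Every extended 1-perfect trade (T_0, T_1) of length 6 has volume 4 and satisfies T_1 = T_0 + 1^6 (where 1^6 is the all-one word of length 6); moreover, every such trade is equivalent to the trade with T_0 = {000000, 111100, 110011, 001111} and T_1 = {111111, 000011, 001100, 110000}. -/

import Mathlib

set_option maxRecDepth 100000
set_option synthInstance.maxHeartbeats 2000000
set_option synthInstance.maxSize 5000
set_option maxHeartbeats 2000000

/-- An extended 1-perfect trade of length `n`. -/
def IsExtTrade {n : ℕ} (T₀ T₁ : Finset (Fin n → ZMod 2)) : Prop :=
  T₀.Nonempty ∧ T₁.Nonempty ∧ Disjoint T₀ T₁ ∧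
  (∀ x ∈ T₀ ∪ T₁, Even (hammingNorm x)) ∧
  ∀ x : Fin n → ZMod 2, Odd (hammingNorm x) →
    (T₀.filter fun y => hammingDist x y = 1).card =
      (T₁.filter fun y => hammingDist x y = 1).card ∧
    (T₀.filter fun y => hammingDist x y = 1).card ≤ 1

/-- Two pairs of sets of even-weight words are equivalent if a coordinate
permutation followed by translation by an even-weight word sends one pair to the
other (in either order). -/
def TradeEquiv {n : ℕ} (C₀ C₁ S₀ S₁ : Finset (Fin n → ZMod 2)) : Prop :=
  ∃ (σ : Equiv.Perm (Fin n)) (v : Fin n → ZMod 2), Even (hammingNorm v) ∧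
    ((S₀.image fun x => (x ∘ σ) + v) = C₀ ∧ (S₁.image fun x => (x ∘ σ) + v) = C₁ ∨
     (S₀.image fun x => (x ∘ σ) + v) = C₁ ∧ (S₁.image fun x => (x ∘ σ) + v) = C₀)

namespace Stmt14Aux

abbrev W := Fin 6 → ZMod 2

abbrev p1 : W := ![1,1,0,0,0,0]
abbrev p2 : W := ![0,0,1,1,0,0]
abbrev p3 : W := ![0,0,0,0,1,1]
abbrev u1 : W := ![1,1,1,1,0,0]
abbrev u2 : W := ![1,1,0,0,1,1]
abbrev u3 : W := ![0,0,1,1,1,1]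
abbrev one6 : W := ![1,1,1,1,1,1]
abbrev C0 : Finset W := {![0,0,0,0,0,0], ![1,1,1,1,0,0], ![1,1,0,0,1,1], ![0,0,1,1,1,1]}
abbrev C1 : Finset W := {![1,1,1,1,1,1], ![0,0,0,0,1,1], ![0,0,1,1,0,0], ![1,1,0,0,0,0]}

lemma zmod2_add_self (a : ZMod 2) : a + a = 0 := by
  revert a; decide

lemma add_add_cancel (x v : W) : x + v + v = x := by
  funext i
  simp only [Pi.add_apply, add_assoc, zmod2_add_self, add_zero]

lemma add_inj (v : W) : Function.Injective (fun x : W => x + v) := by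
  intro x y h
  have := congrArg (fun w : W => w + v) h
  simpa only [add_add_cancel] using this

lemma sum_cast (x : W) : ((hammingNorm x : ℕ) : ZMod 2) = ∑ i, x i := by
  rw [hammingNorm, Finset.card_filter]
  push_cast
  refine Finset.sum_congr rfl fun i _ => ?_
  rcases (by decide : ∀ a : ZMod 2, a = 0 ∨ a = 1) (x i) with h | h <;> simp [h]

lemma even_iff_sum (x : W) : Even (hammingNorm x) ↔ ∑ i, x i = 0 := by
  rw [← sum_cast]
  constructor
  · rintro ⟨c, hc⟩
    rw [hc]; push_cast; exact zmod2_add_self _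
  · intro h
    rcases Nat.even_or_odd (hammingNorm x) with he | ho
    · exact he
    · exfalso
      obtain ⟨c, hc⟩ := ho
      rw [hc] at h
      push_cast at h
      rw [show (2 : ZMod 2) = 0 by decide, zero_mul, zero_add] at h
      exact one_ne_zero h

lemma odd_iff_sum (x : W) : Odd (hammingNorm x) ↔ ∑ i, x i = 1 := by
  rcases Nat.even_or_odd (hammingNorm x) with he | ho
  · rw [even_iff_sum] at he
    constructor
    · intro h; exact absurd (even_iff_sum x |>.mpr he) (Nat.not_even_iff_odd.mpr h)
    · intro h; rw [he] at h; exact absurd h (by decide)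
  · constructor
    · intro _
      have hne : ¬ Even (hammingNorm x) := Nat.not_even_iff_odd.mpr ho
      rw [even_iff_sum] at hne
      rcases (by decide : ∀ a : ZMod 2, a = 0 ∨ a = 1) (∑ i, x i) with h | h
      · exact absurd h hne
      · exact h
    · intro _; exact ho

lemma dist_cast (x y : W) : ((hammingDist x y : ℕ) : ZMod 2) = (∑ i, x i) + ∑ i, y i := by
  rw [hammingDist_eq_hammingNorm, sum_cast]
  have : ∀ i, (-x + y) i = x i + y i := by
    intro i
    simp only [Pi.add_apply, Pi.neg_apply]
    congr 1
    rcases (by decide : ∀ a : ZMod 2, -a = a) (x i) with h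
    exact h
  rw [Finset.sum_congr rfl fun i _ => this i, Finset.sum_add_distrib]

lemma odd_dist_one {x y : W} (h : hammingDist x y = 1) (hy : Even (hammingNorm y)) :
    Odd (hammingNorm x) := by
  rw [odd_iff_sum]
  have hc := dist_cast x y
  rw [h] at hc
  rw [even_iff_sum] at hy
  rw [hy, add_zero] at hc
  push_cast at hc
  exact hc.symm

lemma comp_inj (σ : Equiv.Perm (Fin 6)) : Function.Injective (fun x : W => x ∘ σ) := by
  intro x y h
  funext i
  have := congrFun h (σ.symm i)
  simpa using this

lemma dist_comp (x y : W) (σ : Equiv.Perm (Fin 6)) :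
    hammingDist (x ∘ σ) (y ∘ σ) = hammingDist x y := by
  rw [hammingDist, hammingDist]
  refine Finset.card_bij' (fun i _ => σ i) (fun i _ => σ.symm i) ?_ ?_ ?_ ?_
  · intro a ha
    simp only [Finset.mem_filter, Finset.mem_univ, true_and, Function.comp_apply] at ha ⊢
    exact ha
  · intro a ha
    simp only [Finset.mem_filter, Finset.mem_univ, true_and, Function.comp_apply] at ha ⊢
    simpa using ha
  · intro a _; simp
  · intro a _; simp

lemma wt_comp (x : W) (σ : Equiv.Perm (Fin 6)) : hammingNorm (x ∘ σ) = hammingNorm x := by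
  have h := dist_comp x 0 σ
  rw [hammingDist_zero_right] at h
  rw [← h, ← hammingDist_zero_right]
  rfl

lemma dist_add (x y v : W) : hammingDist (x + v) (y + v) = hammingDist x y := by
  rw [hammingDist, hammingDist]
  congr 1
  ext i
  simp only [Finset.mem_filter, Finset.mem_univ, true_and, Pi.add_apply]
  constructor
  · intro h hxy; exact h (by rw [hxy])
  · intro h hxy; exact h (by exact add_right_cancel hxy)

lemma dist_shift (x y v : W) : hammingDist x (y + v) = hammingDist (x + v) y := by
  have h := dist_add x (y + v) v
  rw [add_add_cancel] at h
  exact h.symm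

lemma sum_add (x v : W) : ∑ i, (x + v) i = (∑ i, x i) + ∑ i, v i := by
  simp only [Pi.add_apply]
  exact Finset.sum_add_distrib

lemma even_add {x v : W} (hv : Even (hammingNorm v)) :
    Even (hammingNorm (x + v)) ↔ Even (hammingNorm x) := by
  rw [even_iff_sum] at hv
  rw [even_iff_sum, even_iff_sum, sum_add, hv, add_zero]

lemma odd_add {x v : W} (hv : Even (hammingNorm v)) (hx : Odd (hammingNorm x)) :
    Odd (hammingNorm (x + v)) := by
  rw [odd_iff_sum] at hx ⊢
  rw [even_iff_sum] at hv
  rw [sum_add, hv, add_zero, hx]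

/-! ### Invariance of trades -/

lemma trade_perm {A B : Finset W} (σ : Equiv.Perm (Fin 6)) (hT : IsExtTrade A B) :
    IsExtTrade (A.image (fun x => x ∘ σ)) (B.image (fun x => x ∘ σ)) := by
  obtain ⟨hA, hB, hdis, hev, hcnt⟩ := hT
  refine ⟨hA.image _, hB.image _, ?_, ?_, ?_⟩
  · exact (Finset.disjoint_image (comp_inj σ)).mpr hdis
  · intro x hx
    rw [← Finset.image_union] at hx
    obtain ⟨y, hy, rfl⟩ := Finset.mem_image.mp hx
    rw [wt_comp]
    exact hev y hy
  · intro x hx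
    have hxσ : Odd (hammingNorm (x ∘ σ.symm)) := by rwa [wt_comp]
    have hrw : ∀ (S : Finset W),
        ((S.image (fun x => x ∘ σ)).filter (fun y => hammingDist x y = 1)).card
          = (S.filter (fun y => hammingDist (x ∘ σ.symm) y = 1)).card := by
      intro S
      rw [Finset.filter_image]
      rw [Finset.card_image_of_injective _ (comp_inj σ)]
      congr 1
      apply Finset.filter_congr
      intro y _
      have hx' : (x ∘ σ.symm) ∘ σ = x := by
        funext i; simp
      have := dist_comp (x ∘ σ.symm) y σ
      rw [hx'] at this
      rw [this]
    rw [hrw A, hrw B]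
    exact hcnt _ hxσ

lemma trade_add {A B : Finset W} (v : W) (hv : Even (hammingNorm v)) (hT : IsExtTrade A B) :
    IsExtTrade (A.image (fun x => x + v)) (B.image (fun x => x + v)) := by
  obtain ⟨hA, hB, hdis, hev, hcnt⟩ := hT
  refine ⟨hA.image _, hB.image _, ?_, ?_, ?_⟩
  · exact (Finset.disjoint_image (add_inj v)).mpr hdis
  · intro x hx
    rw [← Finset.image_union] at hx
    obtain ⟨y, hy, rfl⟩ := Finset.mem_image.mp hx
    exact (even_add hv).mpr (hev y hy)
  · intro x hx
    have hxv : Odd (hammingNorm (x + v)) := odd_add hv hx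
    have hrw : ∀ (S : Finset W),
        ((S.image (fun x => x + v)).filter (fun y => hammingDist x y = 1)).card
          = (S.filter (fun y => hammingDist (x + v) y = 1)).card := by
      intro S
      rw [Finset.filter_image]
      rw [Finset.card_image_of_injective _ (add_inj v)]
      congr 1
      apply Finset.filter_congr
      intro y _
      rw [dist_shift]
    rw [hrw A, hrw B]
    exact hcnt _ hxv

/-! ### Trade tools -/

section Tools

variable {A B : Finset W}

lemma cardA_le (hT : IsExtTrade A B) {x : W} (hx : Odd (hammingNorm x)) :
    (A.filter fun y => hammingDist x y = 1).card ≤ 1 :=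
  (hT.2.2.2.2 x hx).2

lemma cardB_le (hT : IsExtTrade A B) {x : W} (hx : Odd (hammingNorm x)) :
    (B.filter fun y => hammingDist x y = 1).card ≤ 1 :=
  (hT.2.2.2.2 x hx).1 ▸ (hT.2.2.2.2 x hx).2

lemma exists_B (hT : IsExtTrade A B) {x a : W} (hx : Odd (hammingNorm x)) (ha : a ∈ A) (hd : hammingDist x a = 1) :
    ∃ z ∈ B, hammingDist x z = 1 := by
  have h1 : 0 < (A.filter fun y => hammingDist x y = 1).card :=
    Finset.card_pos.mpr ⟨a, Finset.mem_filter.mpr ⟨ha, hd⟩⟩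
  rw [(hT.2.2.2.2 x hx).1] at h1
  obtain ⟨z, hz⟩ := Finset.card_pos.mp h1
  exact ⟨z, (Finset.mem_filter.mp hz).1, (Finset.mem_filter.mp hz).2⟩

lemma exists_A (hT : IsExtTrade A B) {x z : W} (hx : Odd (hammingNorm x)) (hz : z ∈ B) (hd : hammingDist x z = 1) :
    ∃ a ∈ A, hammingDist x a = 1 := by
  have h1 : 0 < (B.filter fun y => hammingDist x y = 1).card :=
    Finset.card_pos.mpr ⟨z, Finset.mem_filter.mpr ⟨hz, hd⟩⟩
  rw [← (hT.2.2.2.2 x hx).1] at h1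
  obtain ⟨a, ha⟩ := Finset.card_pos.mp h1
  exact ⟨a, (Finset.mem_filter.mp ha).1, (Finset.mem_filter.mp ha).2⟩

lemma uniq_A (hT : IsExtTrade A B) {x a a' : W} (hx : Odd (hammingNorm x)) (ha : a ∈ A) (ha' : a' ∈ A)
    (hd : hammingDist x a = 1) (hd' : hammingDist x a' = 1) : a = a' :=
  Finset.card_le_one.mp (cardA_le hT hx) a (Finset.mem_filter.mpr ⟨ha, hd⟩)
    a' (Finset.mem_filter.mpr ⟨ha', hd'⟩)

lemma uniq_B (hT : IsExtTrade A B) {x z z' : W} (hx : Odd (hammingNorm x)) (hz : z ∈ B) (hz' : z' ∈ B)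
    (hd : hammingDist x z = 1) (hd' : hammingDist x z' = 1) : z = z' :=
  Finset.card_le_one.mp (cardB_le hT hx) z (Finset.mem_filter.mpr ⟨hz, hd⟩)
    z' (Finset.mem_filter.mpr ⟨hz', hd'⟩)

lemma exists_mid {a b : W} (h : hammingDist a b = 2) :
    ∃ x : W, hammingDist x a = 1 ∧ hammingDist x b = 1 := by
  classical
  have hne : (Finset.filter (fun i => a i ≠ b i) Finset.univ).Nonempty := by
    rw [← Finset.card_pos]
    rw [hammingDist] at h
    omega
  obtain ⟨i, hi⟩ := hne
  rw [Finset.mem_filter] at hi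
  refine ⟨Function.update a i (b i), ?_, ?_⟩
  · rw [hammingDist]
    have heq : (Finset.filter (fun j => Function.update a i (b i) j ≠ a j) Finset.univ) = {i} := by
      ext j
      simp only [Finset.mem_filter, Finset.mem_univ, true_and, Finset.mem_singleton]
      rcases eq_or_ne j i with rfl | hj
      · simp [Ne.symm hi.2]
      · simp [Function.update_of_ne hj, hj]
    rw [heq, Finset.card_singleton]
  · rw [hammingDist]
    have heq : (Finset.filter (fun j => Function.update a i (b i) j ≠ b j) Finset.univ)
        = (Finset.filter (fun j => a j ≠ b j) Finset.univ).erase i := by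
      ext j
      simp only [Finset.mem_filter, Finset.mem_univ, true_and, Finset.mem_erase]
      rcases eq_or_ne j i with rfl | hj
      · simp
      · simp [Function.update_of_ne hj, hj]
    have hmem : i ∈ Finset.filter (fun j => a j ≠ b j) Finset.univ :=
      Finset.mem_filter.mpr ⟨Finset.mem_univ i, hi.2⟩
    rw [heq, Finset.card_erase_of_mem hmem]
    rw [hammingDist] at h
    omega

lemma nd2_A (hT : IsExtTrade A B) {a a' : W} (ha : a ∈ A) (ha' : a' ∈ A) (hd : hammingDist a a' = 2) : False := by
  obtain ⟨x, h1, h2⟩ := exists_mid hd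
  have hodd : Odd (hammingNorm x) :=
    odd_dist_one h1 (hT.2.2.2.1 a (Finset.mem_union_left _ ha))
  have heq : a = a' := uniq_A hT hodd ha ha' h1 h2
  rw [heq, hammingDist_self] at hd
  exact absurd hd (by decide)

lemma nd2_B (hT : IsExtTrade A B) {z z' : W} (hz : z ∈ B) (hz' : z' ∈ B) (hd : hammingDist z z' = 2) : False := by
  obtain ⟨x, h1, h2⟩ := exists_mid hd
  have hodd : Odd (hammingNorm x) :=
    odd_dist_one h1 (hT.2.2.2.1 z (Finset.mem_union_right _ hz))
  have heq : z = z' := uniq_B hT hodd hz hz' h1 h2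
  rw [heq, hammingDist_self] at hd
  exact absurd hd (by decide)

end Tools

/-! ### The classification for the standard matching -/

lemma wtle (x : W) : hammingNorm x ≤ 6 := by
  simpa using (hammingNorm_le_card_fintype (x := x))

lemma main_concrete {A B : Finset W} (hT : IsExtTrade A B) (h0 : (0 : W) ∈ A)
    (hp1 : p1 ∈ B) (hp2 : p2 ∈ B) (hp3 : p3 ∈ B) :
    A = C0 ∧ B = C1 := by
  have hdisj := hT.2.2.1
  have hev := hT.2.2.2.1
  have hBne0 : ∀ z ∈ B, z ≠ 0 := fun z hz h =>
    Finset.disjoint_left.mp hdisj h0 (h ▸ hz)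
  have hAeven : ∀ a ∈ A, Even (hammingNorm a) := fun a ha =>
    hev a (Finset.mem_union_left _ ha)
  have hBeven : ∀ z ∈ B, Even (hammingNorm z) := fun z hz =>
    hev z (Finset.mem_union_right _ hz)
  -- structure of B
  have hB6 : ∀ z : W, hammingNorm z = 6 → z = one6 := by decide
  have hBstruct : ∀ z ∈ B, z = p1 ∨ z = p2 ∨ z = p3 ∨ z = one6 := by
    intro z hz
    obtain ⟨c, hc⟩ := hBeven z hz
    have hn0 : hammingNorm z ≠ 0 := fun h => hBne0 z hz (hammingNorm_eq_zero.mp h)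
    have h6 := wtle z
    have hcase : hammingNorm z = 2 ∨ hammingNorm z = 4 ∨ hammingNorm z = 6 := by omega
    rcases hcase with h | h | h
    · have := (by decide : ∀ z : W, hammingNorm z = 2 → hammingDist z p1 ≠ 2 →
        hammingDist z p2 ≠ 2 → hammingDist z p3 ≠ 2 → (z = p1 ∨ z = p2 ∨ z = p3)) z h
        (fun hd => nd2_B hT hz hp1 hd) (fun hd => nd2_B hT hz hp2 hd)
        (fun hd => nd2_B hT hz hp3 hd)
      tauto
    · exfalso
      have := (by decide : ∀ z : W, hammingNorm z = 4 →
        (hammingDist z p1 = 2 ∨ hammingDist z p2 = 2 ∨ hammingDist z p3 = 2)) z h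
      rcases this with hd | hd | hd
      exacts [nd2_B hT hz hp1 hd, nd2_B hT hz hp2 hd, nd2_B hT hz hp3 hd]
    · exact Or.inr (Or.inr (Or.inr (hB6 z h)))
  -- one6 is not in A
  have hone6A : one6 ∉ A := by
    intro hone
    have hx : Odd (hammingNorm (![1,1,1,1,1,0] : W)) := Nat.odd_iff.mpr (by decide)
    obtain ⟨z, hzB, hzd⟩ := exists_B hT hx hone
      (by decide : hammingDist ![1,1,1,1,1,0] one6 = 1)
    rcases hBstruct z hzB with rfl | rfl | rfl | rfl
    · exact absurd hzd (by decide)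
    · exact absurd hzd (by decide)
    · exact absurd hzd (by decide)
    · exact Finset.disjoint_left.mp hdisj hone hzB
  -- structure of A
  have hAwt : ∀ a ∈ A, a ≠ 0 → hammingNorm a = 4 := by
    intro a ha hne
    have h2 : hammingDist a 0 ≠ 2 := fun h => nd2_A hT ha h0 h
    rw [hammingDist_zero_right] at h2
    obtain ⟨c, hc⟩ := hAeven a ha
    have hn0 : hammingNorm a ≠ 0 := fun h => hne (hammingNorm_eq_zero.mp h)
    have h6 : hammingNorm a ≠ 6 := by
      intro h
      apply hone6A
      rw [← hB6 a h]
      exact ha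
    have := wtle a
    omega
  have hA4 : ∀ a ∈ A, a ≠ 0 → a = u1 ∨ a = u2 ∨ a = u3 := by
    intro a ha hne
    have h4 := hAwt a ha hne
    have inner : ∀ x : W, hammingDist x a = 1 → hammingNorm x = 3 →
        (hammingDist x p1 = 1 ∨ hammingDist x p2 = 1 ∨ hammingDist x p3 = 1) := by
      intro x hxa hx3
      have hodd : Odd (hammingNorm x) := Nat.odd_iff.mpr (by rw [hx3])
      obtain ⟨z, hzB, hzd⟩ := exists_B hT hodd ha hxa
      rcases hBstruct z hzB with rfl | rfl | rfl | rfl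
      · exact Or.inl hzd
      · exact Or.inr (Or.inl hzd)
      · exact Or.inr (Or.inr hzd)
      · exact absurd hzd
          ((by decide : ∀ x : W, hammingNorm x = 3 → hammingDist x one6 ≠ 1) x hx3)
    exact (by decide : ∀ a : W, hammingNorm a = 4 →
      (∀ x : W, hammingDist x a = 1 → hammingNorm x = 3 →
        (hammingDist x p1 = 1 ∨ hammingDist x p2 = 1 ∨ hammingDist x p3 = 1)) →
      (a = u1 ∨ a = u2 ∨ a = u3)) a h4 inner
  -- the three weight-4 words are in A
  have hu : ∀ x : W, hammingNorm x = 3 → ∀ z ∈ B, hammingDist x z = 1 →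
      ∀ t : W, (∀ w : W, (w = u1 ∨ w = u2 ∨ w = u3) → hammingDist x w = 1 → w = t) →
      hammingDist x 0 ≠ 1 → t ∈ A := by
    intro x hx3 z hzB hzd t ht h0d
    have hodd : Odd (hammingNorm x) := Nat.odd_iff.mpr (by rw [hx3])
    obtain ⟨a, haA, had⟩ := exists_A hT hodd hzB hzd
    have hne : a ≠ 0 := by
      rintro rfl
      exact h0d had
    have := ht a (hA4 a haA hne) had
    rwa [← this]
  have hu1 : u1 ∈ A := by
    refine hu ![1,1,1,0,0,0] (by decide) p1 hp1 (by decide) u1 ?_ (by decide)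
    decide
  have hu2 : u2 ∈ A := by
    refine hu ![1,1,0,0,1,0] (by decide) p1 hp1 (by decide) u2 ?_ (by decide)
    decide
  have hu3 : u3 ∈ A := by
    refine hu ![0,0,1,1,1,0] (by decide) p2 hp2 (by decide) u3 ?_ (by decide)
    decide
  -- one6 is in B
  have hone6B : one6 ∈ B := by
    have hx : Odd (hammingNorm (![1,1,1,1,1,0] : W)) := Nat.odd_iff.mpr (by decide)
    obtain ⟨z, hzB, hzd⟩ := exists_B hT hx hu1
      (by decide : hammingDist ![1,1,1,1,1,0] u1 = 1)
    rcases hBstruct z hzB with rfl | rfl | rfl | rfl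
    · exact absurd hzd (by decide)
    · exact absurd hzd (by decide)
    · exact absurd hzd (by decide)
    · exact hzB
  constructor
  · apply Finset.Subset.antisymm
    · intro a ha
      by_cases h : a = 0
      · subst h
        have : (0 : W) = ![0,0,0,0,0,0] := by decide
        rw [this]
        exact Finset.mem_insert_self _ _
      · rcases hA4 a ha h with rfl | rfl | rfl
        · exact Finset.mem_insert_of_mem (Finset.mem_insert_self _ _)
        · exact Finset.mem_insert_of_mem (Finset.mem_insert_of_mem (Finset.mem_insert_self _ _))
        · exact Finset.mem_insert_of_mem (Finset.mem_insert_of_mem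
            (Finset.mem_insert_of_mem (Finset.mem_singleton_self _)))
    · intro a ha
      simp only [Finset.mem_insert, Finset.mem_singleton] at ha
      rcases ha with rfl | rfl | rfl | rfl
      · rw [show (![0,0,0,0,0,0] : W) = 0 by decide]
        exact h0
      · exact hu1
      · exact hu2
      · exact hu3
  · apply Finset.Subset.antisymm
    · intro z hz
      rcases hBstruct z hz with rfl | rfl | rfl | rfl
      · exact Finset.mem_insert_of_mem (Finset.mem_insert_of_mem (Finset.mem_insert_of_mem
          (Finset.mem_singleton_self _)))
      · exact Finset.mem_insert_of_mem (Finset.mem_insert_of_mem (Finset.mem_insert_self _ _))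
      · exact Finset.mem_insert_of_mem (Finset.mem_insert_self _ _)
      · exact Finset.mem_insert_self _ _
    · intro z hz
      simp only [Finset.mem_insert, Finset.mem_singleton] at hz
      rcases hz with rfl | rfl | rfl | rfl
      exacts [hone6B, hp3, hp2, hp1]

/-! ### From three pairs to the classification -/

lemma finish {A B : Finset W} (hT : IsExtTrade A B) (h0 : (0 : W) ∈ A) (σ : Equiv.Perm (Fin 6))
    {z1 z2 z3 : W} (h1 : z1 ∈ B) (h2 : z2 ∈ B) (h3 : z3 ∈ B)
    (e1 : z1 ∘ σ = p1) (e2 : z2 ∘ σ = p2) (e3 : z3 ∘ σ = p3) :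
    ∃ σ' : Equiv.Perm (Fin 6),
      A.image (fun x => x ∘ σ') = C0 ∧ B.image (fun x => x ∘ σ') = C1 := by
  refine ⟨σ, ?_, ?_⟩
  · exact (main_concrete (trade_perm σ hT)
      (Finset.mem_image.mpr ⟨0, h0, rfl⟩)
      (Finset.mem_image.mpr ⟨z1, h1, e1⟩)
      (Finset.mem_image.mpr ⟨z2, h2, e2⟩)
      (Finset.mem_image.mpr ⟨z3, h3, e3⟩)).1
  · exact (main_concrete (trade_perm σ hT)
      (Finset.mem_image.mpr ⟨0, h0, rfl⟩)
      (Finset.mem_image.mpr ⟨z1, h1, e1⟩)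
      (Finset.mem_image.mpr ⟨z2, h2, e2⟩)
      (Finset.mem_image.mpr ⟨z3, h3, e3⟩)).2

lemma wt2_of {A B : Finset W} (hT : IsExtTrade A B) (h0 : (0 : W) ∈ A) {x z : W}
    (hx : hammingNorm x = 1) (hz : z ∈ B) (hd : hammingDist x z = 1) : hammingNorm z = 2 := by
  have tri := hammingDist_triangle z x 0
  simp only [hammingDist_zero_right] at tri
  rw [hammingDist_comm z x, hd, hx] at tri
  obtain ⟨c, hc⟩ := hT.2.2.2.1 z (Finset.mem_union_right _ hz)
  have hne : z ≠ 0 := fun h => Finset.disjoint_left.mp hT.2.2.1 h0 (h ▸ hz)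
  have hn0 : hammingNorm z ≠ 0 := fun h => hne (hammingNorm_eq_zero.mp h)
  omega

lemma leaf {A B : Finset W} (hT : IsExtTrade A B) (h0 : (0 : W) ∈ A)
    {z1 z2 : W} (h1 : z1 ∈ B) (h2 : z2 ∈ B)
    (x3 : W) (hx3 : hammingNorm x3 = 1) (t : W)
    (huniq : ∀ z : W, hammingNorm z = 2 → hammingDist x3 z = 1 →
        hammingDist z z1 ≠ 2 → hammingDist z z2 ≠ 2 → z = t)
    (f g : Fin 6 → Fin 6) (hgf : ∀ i, g (f i) = i) (hfg : ∀ i, f (g i) = i)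
    (e1 : z1 ∘ f = p1) (e2 : z2 ∘ f = p2) (e3 : t ∘ f = p3) :
    ∃ σ' : Equiv.Perm (Fin 6),
      A.image (fun x => x ∘ σ') = C0 ∧ B.image (fun x => x ∘ σ') = C1 := by
  have hodd : Odd (hammingNorm x3) := Nat.odd_iff.mpr (by rw [hx3])
  have hd0 : hammingDist x3 (0 : W) = 1 := by rw [hammingDist_zero_right, hx3]
  obtain ⟨z, hzB, hzd⟩ := exists_B hT hodd h0 hd0
  have hz2 := wt2_of hT h0 hx3 hzB hzd
  have hzt : z = t :=
    huniq z hz2 hzd (fun h => nd2_B hT hzB h1 h) (fun h => nd2_B hT hzB h2 h)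
  subst hzt
  exact finish hT h0 ⟨f, g, hgf, hfg⟩ h1 h2 hzB e1 e2 e3

lemma key {A B : Finset W} (hT : IsExtTrade A B) (h0 : (0 : W) ∈ A) :
    ∃ σ : Equiv.Perm (Fin 6),
      A.image (fun x => x ∘ σ) = C0 ∧ B.image (fun x => x ∘ σ) = C1 := by
  have hodd : Odd (hammingNorm (![1,0,0,0,0,0] : W)) := Nat.odd_iff.mpr (by decide)
  obtain ⟨z, hzB, hzd⟩ := exists_B hT hodd h0 (by rw [hammingDist_zero_right]; decide)
  have hz2 := wt2_of hT h0 (by decide) hzB hzd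
  have hM1 := (by decide : ∀ z : W, hammingNorm z = 2 →
    hammingDist ![1,0,0,0,0,0] z = 1 →
    (z = ![1,1,0,0,0,0] ∨ z = ![1,0,1,0,0,0] ∨ z = ![1,0,0,1,0,0] ∨
     z = ![1,0,0,0,1,0] ∨ z = ![1,0,0,0,0,1])) z hz2 hzd
  rcases hM1 with rfl | rfl | rfl | rfl | rfl

  · -- z1 = [0, 1]
    have hodd2 : Odd (hammingNorm (![0,0,1,0,0,0] : W)) := Nat.odd_iff.mpr (by decide)
    obtain ⟨z', hz'B, hz'd⟩ := exists_B hT hodd2 h0 (by rw [hammingDist_zero_right]; decide)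
    have hz'2 := wt2_of hT h0 (by decide) hz'B hz'd
    have hM2 := (by decide : ∀ v : W, hammingNorm v = 2 →
      hammingDist ![0,0,1,0,0,0] v = 1 → hammingDist v ![1,1,0,0,0,0] ≠ 2 →
      (v = ![0,0,1,1,0,0] ∨ v = ![0,0,1,0,1,0] ∨ v = ![0,0,1,0,0,1])) z' hz'2 hz'd
      (fun h => nd2_B hT hz'B hzB h)
    rcases hM2 with rfl | rfl | rfl
    · exact leaf hT h0 hzB hz'B ![0,0,0,0,1,0] (by decide) ![0,0,0,0,1,1]
        (by decide) ![0,1,2,3,4,5] ![0,1,2,3,4,5] (by decide) (by decide)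
        (by decide) (by decide) (by decide)
    · exact leaf hT h0 hzB hz'B ![0,0,0,1,0,0] (by decide) ![0,0,0,1,0,1]
        (by decide) ![0,1,2,4,3,5] ![0,1,2,4,3,5] (by decide) (by decide)
        (by decide) (by decide) (by decide)
    · exact leaf hT h0 hzB hz'B ![0,0,0,1,0,0] (by decide) ![0,0,0,1,1,0]
        (by decide) ![0,1,2,5,3,4] ![0,1,2,4,5,3] (by decide) (by decide)
        (by decide) (by decide) (by decide)

  · -- z1 = [0, 2]
    have hodd2 : Odd (hammingNorm (![0,1,0,0,0,0] : W)) := Nat.odd_iff.mpr (by decide)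
    obtain ⟨z', hz'B, hz'd⟩ := exists_B hT hodd2 h0 (by rw [hammingDist_zero_right]; decide)
    have hz'2 := wt2_of hT h0 (by decide) hz'B hz'd
    have hM2 := (by decide : ∀ v : W, hammingNorm v = 2 →
      hammingDist ![0,1,0,0,0,0] v = 1 → hammingDist v ![1,0,1,0,0,0] ≠ 2 →
      (v = ![0,1,0,1,0,0] ∨ v = ![0,1,0,0,1,0] ∨ v = ![0,1,0,0,0,1])) z' hz'2 hz'd
      (fun h => nd2_B hT hz'B hzB h)
    rcases hM2 with rfl | rfl | rfl
    · exact leaf hT h0 hzB hz'B ![0,0,0,0,1,0] (by decide) ![0,0,0,0,1,1]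
        (by decide) ![0,2,1,3,4,5] ![0,2,1,3,4,5] (by decide) (by decide)
        (by decide) (by decide) (by decide)
    · exact leaf hT h0 hzB hz'B ![0,0,0,1,0,0] (by decide) ![0,0,0,1,0,1]
        (by decide) ![0,2,1,4,3,5] ![0,2,1,4,3,5] (by decide) (by decide)
        (by decide) (by decide) (by decide)
    · exact leaf hT h0 hzB hz'B ![0,0,0,1,0,0] (by decide) ![0,0,0,1,1,0]
        (by decide) ![0,2,1,5,3,4] ![0,2,1,4,5,3] (by decide) (by decide)
        (by decide) (by decide) (by decide)

  · -- z1 = [0, 3]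
    have hodd2 : Odd (hammingNorm (![0,1,0,0,0,0] : W)) := Nat.odd_iff.mpr (by decide)
    obtain ⟨z', hz'B, hz'd⟩ := exists_B hT hodd2 h0 (by rw [hammingDist_zero_right]; decide)
    have hz'2 := wt2_of hT h0 (by decide) hz'B hz'd
    have hM2 := (by decide : ∀ v : W, hammingNorm v = 2 →
      hammingDist ![0,1,0,0,0,0] v = 1 → hammingDist v ![1,0,0,1,0,0] ≠ 2 →
      (v = ![0,1,1,0,0,0] ∨ v = ![0,1,0,0,1,0] ∨ v = ![0,1,0,0,0,1])) z' hz'2 hz'd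
      (fun h => nd2_B hT hz'B hzB h)
    rcases hM2 with rfl | rfl | rfl
    · exact leaf hT h0 hzB hz'B ![0,0,0,0,1,0] (by decide) ![0,0,0,0,1,1]
        (by decide) ![0,3,1,2,4,5] ![0,2,3,1,4,5] (by decide) (by decide)
        (by decide) (by decide) (by decide)
    · exact leaf hT h0 hzB hz'B ![0,0,1,0,0,0] (by decide) ![0,0,1,0,0,1]
        (by decide) ![0,3,1,4,2,5] ![0,2,4,1,3,5] (by decide) (by decide)
        (by decide) (by decide) (by decide)
    · exact leaf hT h0 hzB hz'B ![0,0,1,0,0,0] (by decide) ![0,0,1,0,1,0]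
        (by decide) ![0,3,1,5,2,4] ![0,2,4,1,5,3] (by decide) (by decide)
        (by decide) (by decide) (by decide)

  · -- z1 = [0, 4]
    have hodd2 : Odd (hammingNorm (![0,1,0,0,0,0] : W)) := Nat.odd_iff.mpr (by decide)
    obtain ⟨z', hz'B, hz'd⟩ := exists_B hT hodd2 h0 (by rw [hammingDist_zero_right]; decide)
    have hz'2 := wt2_of hT h0 (by decide) hz'B hz'd
    have hM2 := (by decide : ∀ v : W, hammingNorm v = 2 →
      hammingDist ![0,1,0,0,0,0] v = 1 → hammingDist v ![1,0,0,0,1,0] ≠ 2 →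
      (v = ![0,1,1,0,0,0] ∨ v = ![0,1,0,1,0,0] ∨ v = ![0,1,0,0,0,1])) z' hz'2 hz'd
      (fun h => nd2_B hT hz'B hzB h)
    rcases hM2 with rfl | rfl | rfl
    · exact leaf hT h0 hzB hz'B ![0,0,0,1,0,0] (by decide) ![0,0,0,1,0,1]
        (by decide) ![0,4,1,2,3,5] ![0,2,3,4,1,5] (by decide) (by decide)
        (by decide) (by decide) (by decide)
    · exact leaf hT h0 hzB hz'B ![0,0,1,0,0,0] (by decide) ![0,0,1,0,0,1]
        (by decide) ![0,4,1,3,2,5] ![0,2,4,3,1,5] (by decide) (by decide)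
        (by decide) (by decide) (by decide)
    · exact leaf hT h0 hzB hz'B ![0,0,1,0,0,0] (by decide) ![0,0,1,1,0,0]
        (by decide) ![0,4,1,5,2,3] ![0,2,4,5,1,3] (by decide) (by decide)
        (by decide) (by decide) (by decide)

  · -- z1 = [0, 5]
    have hodd2 : Odd (hammingNorm (![0,1,0,0,0,0] : W)) := Nat.odd_iff.mpr (by decide)
    obtain ⟨z', hz'B, hz'd⟩ := exists_B hT hodd2 h0 (by rw [hammingDist_zero_right]; decide)
    have hz'2 := wt2_of hT h0 (by decide) hz'B hz'd
    have hM2 := (by decide : ∀ v : W, hammingNorm v = 2 →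
      hammingDist ![0,1,0,0,0,0] v = 1 → hammingDist v ![1,0,0,0,0,1] ≠ 2 →
      (v = ![0,1,1,0,0,0] ∨ v = ![0,1,0,1,0,0] ∨ v = ![0,1,0,0,1,0])) z' hz'2 hz'd
      (fun h => nd2_B hT hz'B hzB h)
    rcases hM2 with rfl | rfl | rfl
    · exact leaf hT h0 hzB hz'B ![0,0,0,1,0,0] (by decide) ![0,0,0,1,1,0]
        (by decide) ![0,5,1,2,3,4] ![0,2,3,4,5,1] (by decide) (by decide)
        (by decide) (by decide) (by decide)
    · exact leaf hT h0 hzB hz'B ![0,0,1,0,0,0] (by decide) ![0,0,1,0,1,0]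
        (by decide) ![0,5,1,3,2,4] ![0,2,4,3,5,1] (by decide) (by decide)
        (by decide) (by decide) (by decide)
    · exact leaf hT h0 hzB hz'B ![0,0,1,0,0,0] (by decide) ![0,0,1,1,0,0]
        (by decide) ![0,5,1,4,2,3] ![0,2,4,5,3,1] (by decide) (by decide)
        (by decide) (by decide) (by decide)

lemma shuffle (x v w : W) : x + v + w + v = x + w := by
  funext i
  simp only [Pi.add_apply]
  have h : x i + v i + w i + v i = x i + w i + (v i + v i) := by ring
  rw [h, zmod2_add_self, add_zero]

end Stmt14Aux

open Stmt14Aux in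
/-- every extended 1-perfect trade of length 6 has volume 4,
satisfies T₁ = T₀ + 1⁶, and is equivalent to the trade
({000000, 111100, 110011, 001111}, {111111, 000011, 001100, 110000}). -/
theorem stmt_14 (T₀ T₁ : Finset (Fin 6 → ZMod 2)) (hT : IsExtTrade T₀ T₁) :
    T₀.card = 4 ∧
    T₁ = T₀.image (fun x => x + fun _ => (1 : ZMod 2)) ∧
    TradeEquiv T₀ T₁
      ({![0,0,0,0,0,0], ![1,1,1,1,0,0], ![1,1,0,0,1,1], ![0,0,1,1,1,1]} :
        Finset (Fin 6 → ZMod 2))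
      ({![1,1,1,1,1,1], ![0,0,0,0,1,1], ![0,0,1,1,0,0], ![1,1,0,0,0,0]} :
        Finset (Fin 6 → ZMod 2)) := by
  obtain ⟨y₀, hy₀⟩ := hT.1
  have hy₀ev : Even (hammingNorm y₀) := hT.2.2.2.1 y₀ (Finset.mem_union_left _ hy₀)
  have hT' := trade_add y₀ hy₀ev hT
  set A := T₀.image (fun x => x + y₀) with hAdef
  set B := T₁.image (fun x => x + y₀) with hBdef
  have h0 : (0 : W) ∈ A :=
    Finset.mem_image.mpr ⟨y₀, hy₀, by funext i; exact zmod2_add_self (y₀ i)⟩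
  obtain ⟨σ, hA, hB⟩ := key hT' h0
  have hidy : ((fun x : W => x + y₀) ∘ (fun x : W => x + y₀)) = id :=
    funext fun x => add_add_cancel x y₀
  have hT0A : T₀ = A.image (fun x => x + y₀) := by
    rw [hAdef, Finset.image_image, hidy, Finset.image_id]
  have hT1B : T₁ = B.image (fun x => x + y₀) := by
    rw [hBdef, Finset.image_image, hidy, Finset.image_id]
  have hcard : T₀.card = 4 := by
    have h1 : A.card = T₀.card := Finset.card_image_of_injective _ (add_inj y₀)
    have h2 : (A.image (fun x => x ∘ σ)).card = A.card :=
      Finset.card_image_of_injective _ (comp_inj σ)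
    rw [hA] at h2
    have h3 : (C0 : Finset W).card = 4 := by decide
    omega
  have hone_all : ∀ j : Fin 6, one6 j = 1 := by decide
  have hcomm : ((fun x : W => x ∘ σ) ∘ (fun x : W => x + one6))
      = ((fun x : W => x + one6) ∘ (fun x : W => x ∘ σ)) := by
    funext x
    show (x + one6) ∘ σ = x ∘ σ + one6
    funext i
    simp only [Pi.add_apply, Function.comp_apply]
    rw [hone_all, hone_all]
  have hC : (C1 : Finset W) = C0.image (fun x => x + one6) := by decide
  have hBA : B = A.image (fun x => x + one6) := by
    apply Finset.image_injective (comp_inj σ)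
    calc Finset.image (fun x => x ∘ ⇑σ) B = C1 := hB
      _ = Finset.image (fun x => x + one6) C0 := hC
      _ = Finset.image (fun x => x + one6) (Finset.image (fun x => x ∘ ⇑σ) A) := by rw [hA]
      _ = Finset.image ((fun x => x + one6) ∘ (fun x => x ∘ ⇑σ)) A := Finset.image_image
      _ = Finset.image ((fun x => x ∘ ⇑σ) ∘ (fun x => x + one6)) A := by rw [hcomm]
      _ = Finset.image (fun x => x ∘ ⇑σ) (Finset.image (fun x => x + one6) A) :=
          (Finset.image_image).symm
  have hT1 : T₁ = T₀.image (fun x => x + fun _ => (1 : ZMod 2)) := by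
    have hone : (fun _ => (1 : ZMod 2)) = one6 := by funext i; rw [hone_all]
    rw [hone, hT1B, hBA, hAdef, Finset.image_image, Finset.image_image]
    congr 1
    funext x
    show x + y₀ + one6 + y₀ = x + one6
    exact shuffle x y₀ one6
  refine ⟨hcard, hT1, σ.symm, y₀, hy₀ev, Or.inl ⟨?_, ?_⟩⟩
  · show Finset.image (fun x => (x ∘ ⇑σ.symm) + y₀) (C0 : Finset W) = T₀
    rw [← hA, Finset.image_image]
    have heq : ((fun x : W => (x ∘ σ.symm) + y₀) ∘ (fun x : W => x ∘ σ))
        = fun x : W => x + y₀ := by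
      funext x
      show ((x ∘ σ) ∘ σ.symm) + y₀ = x + y₀
      congr 1
      funext i
      simp
    rw [heq, ← hT0A]
  · show Finset.image (fun x => (x ∘ ⇑σ.symm) + y₀) (C1 : Finset W) = T₁
    rw [← hB, Finset.image_image]
    have heq : ((fun x : W => (x ∘ σ.symm) + y₀) ∘ (fun x : W => x ∘ σ))
        = fun x : W => x + y₀ := by
      funext x
      show ((x ∘ σ) ∘ σ.symm) + y₀ = x + y₀
      congr 1
      funext i
      simp
    rw [heq, ← hT1B]
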